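/- Let B be a strict supertropically symmetric bilinear form on a supertropical vector space V over a supertropical semifield F, and let S = {s₁,…,s_n} ⊆ V be a set any two of whose elements form a Cauchy-Schwartz pair. Then any two vectors in the span of S are weakly Cauchy-Schwartz: for v = Σᵢ αᵢsᵢ and w = Σⱼ βⱼsⱼ with αᵢ, βⱼ ∈ F, one has ⟨v,v⟩⟨w,w⟩ ≥_ν ⟨v,w⟩² + ⟨w,v⟩². -/

import Mathlib

/-- A supertropical semifield (with an adjoined zero element), following
Izhakian–Knebusch–Rowen: a commutative semiring `F` together with an idempotent
additive and multiplicative ghost map `ν : F → F` whose fixed points are the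
ghost elements (together with `0`), such that `a + b = ν a` when `ν a = ν b`
and `a + b ∈ {a, b}` otherwise, the tangible elements `T = F ∖ (G ∪ {0})`
form a multiplicative group, and `ν` maps `T` onto the nonzero ghosts. -/
class SupertropicalSemifield (F : Type*) extends CommSemiring F where
  nu : F → F
  nu_zero : nu 0 = 0
  nu_idem : ∀ a, nu (nu a) = nu a
  nu_add : ∀ a b, nu (a + b) = nu a + nu b
  nu_mul : ∀ a b, nu (a * b) = nu a * nu b
  add_eq_nu : ∀ a b, nu a = nu b → a + b = nu a
  add_cases : ∀ a b, nu a ≠ nu b → a + b = a ∨ a + b = b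
  tangible_inv : ∀ a, nu a ≠ a → ∃ b, nu b ≠ b ∧ a * b = 1
  nu_onto : ∀ g, nu g = g → g ≠ 0 → ∃ t, nu t ≠ t ∧ nu t = g

namespace Supertropical

open SupertropicalSemifield

variable (F : Type*) [SupertropicalSemifield F]

/-- `a` is ghost or zero (i.e. `a ∈ G ∪ {0}`, the fixed points of `ν`). -/
def Ghost0 (a : F) : Prop := nu a = a

/-- `a` is tangible: `a ∈ T = F ∖ (G ∪ {0})`. -/
def Tangible (a : F) : Prop := nu a ≠ a

/-- The ghost-surpassing relation on `F`:  `b ⊨_gs a` iff `b = a + c` with `c` ghost or zero. -/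
def GS (b a : F) : Prop := ∃ c, Ghost0 F c ∧ b = a + c

/-- `a ≥_ν b`. -/
def nuGE (a b : F) : Prop := nu a + nu b = nu a

/-- `a >_ν b`. -/
def nuGT (a b : F) : Prop := nuGE F a b ∧ nu a ≠ nu b

/-- `a ≅_ν b` (`ν`-matched). -/
def nuEq (a b : F) : Prop := nu a = nu b

section VS

variable {V : Type*} [AddCommMonoid V] [Module F V]

/-- `v` lies in the ghost submodule `H₀ = eV`, `e = 1 + 1`. -/
def GhostV (v : V) : Prop := ∃ u : V, v = ((1 : F) + 1) • u

/-- The ghost-surpassing relation on a supertropical vector space: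
`v ⊨_gs w` iff `v = w + h` with `h ∈ H₀`. -/
def GSV (v w : V) : Prop := ∃ h : V, GhostV F h ∧ v = w + h

variable {W : Type*} [AddCommMonoid W] [Module F W]

/-- A supertropical map `φ : V → W`: `φ(v + w) ⊨_gs φ(v) + φ(w)` and
`φ(a • v) = a • φ(v)` for tangible `a`. -/
def STMap (φ : V → W) : Prop :=
  (∀ v w : V, GSV F (φ (v + w)) (φ v + φ w)) ∧
    ∀ a : F, Tangible F a → ∀ v : V, φ (a • v) = a • φ v

/-- A family of vectors is tropically independent if no linear combination with
tangible coefficients, not all zero, lies in the ghost submodule. -/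
def TropIndep {m : ℕ} (v : Fin m → V) : Prop :=
  ∀ β : Fin m → F, (∀ i, Tangible F (β i) ∨ β i = 0) → (∃ i, β i ≠ 0) →
    ¬ GhostV F (∑ i, β i • v i)

/-- `S ⊆ V` has rank `r`: it contains `r` tropically independent vectors, and no
tropically independent family in `S` has more than `r` members. -/
def HasRank (S : Set V) (r : ℕ) : Prop :=
  (∃ v : Fin r → V, (∀ i, v i ∈ S) ∧ TropIndep F v) ∧
    ∀ (m : ℕ) (v : Fin m → V), (∀ i, v i ∈ S) → TropIndep F v → m ≤ r

/-- A supertropical bilinear form: a supertropical map in each variable. -/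
def IsBilinear (B : V → V → F) : Prop :=
  (∀ w : V, STMap F (fun v => B v w)) ∧ ∀ v : V, STMap F (fun w => B v w)

/-- `B` is supertropically symmetric: `⟨v,w⟩ + ⟨w,v⟩` is ghost (or zero) for all `v, w`. -/
def SupSymmetric (B : V → V → F) : Prop := ∀ v w : V, Ghost0 F (B v w + B w v)

/-- A strict bilinear form. -/
def IsStrict (B : V → V → F) : Prop :=
  ∀ (a₁ a₂ b₁ b₂ : F) (v₁ v₂ w₁ w₂ : V),
    B (a₁ • v₁ + a₂ • v₂) (b₁ • w₁ + b₂ • w₂) =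
      a₁ * b₁ * B v₁ w₁ + a₁ * b₂ * B v₁ w₂ + a₂ * b₁ * B v₂ w₁ + a₂ * b₂ * B v₂ w₂

/-- `v` and `w` are compatible: `⟨v,v⟩ + ⟨w,w⟩ ≥_ν ⟨v,w⟩ + ⟨w,v⟩`. -/
def Compatible (B : V → V → F) (v w : V) : Prop :=
  nuGE F (B v v + B w w) (B v w + B w v)

/-- `v` and `w` are strictly compatible. -/
def StrictlyCompatible (B : V → V → F) (v w : V) : Prop :=
  Compatible F B v w ∧
    (nuEq F (B v v) (B w w) ∨ nuGT F (B v v + B w w) (B v w + B w v))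

/-- The pair `{v, w}` is weakly Cauchy-Schwartz: `⟨v,v⟩⟨w,w⟩ ≥_ν ⟨v,w⟩² + ⟨w,v⟩²`. -/
def WeakCS (B : V → V → F) (v w : V) : Prop :=
  nuGE F (B v v * B w w) (B v w ^ 2 + B w v ^ 2)

/-- The pair `{v, w}` is Cauchy-Schwartz: `⟨v,v⟩⟨w,w⟩ >_ν ⟨v,w⟩² + ⟨w,v⟩²`. -/
def CS (B : V → V → F) (v w : V) : Prop :=
  nuGT F (B v v * B w w) (B v w ^ 2 + B w v ^ 2)

end VS

/-- The permanent (supertropical determinant) of a square matrix. -/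
def perm {n : ℕ} (A : Matrix (Fin n) (Fin n) F) : F :=
  ∑ σ : Equiv.Perm (Fin n), ∏ i, A i (σ i)

/-- The supertropical adjoint matrix: the transpose of the matrix of cofactors. -/
def adjSup {n : ℕ} (A : Matrix (Fin (n + 1)) (Fin (n + 1)) F) :
    Matrix (Fin (n + 1)) (Fin (n + 1)) F :=
  Matrix.of fun i j => perm F (A.submatrix (Fin.succAbove j) (Fin.succAbove i))

end Supertropical

section Aux

open Supertropical SupertropicalSemifield

variable {F : Type*} [SupertropicalSemifield F]

lemma nuGE_refl' (a : F) : nuGE F a a := by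
  show nu a + nu a = nu a
  rw [add_eq_nu _ _ rfl, nu_idem]

lemma nuGE_trans' {a b c : F} (h1 : nuGE F a b) (h2 : nuGE F b c) : nuGE F a c := by
  show nu a + nu c = nu a
  calc nu a + nu c = (nu a + nu b) + nu c := by rw [h1]
    _ = nu a + (nu b + nu c) := add_assoc _ _ _
    _ = nu a + nu b := by rw [h2]
    _ = nu a := h1

lemma nu_antisymm {a b : F} (h1 : nuGE F a b) (h2 : nuGE F b a) : nu a = nu b := by
  calc nu a = nu a + nu b := h1.symm
    _ = nu b + nu a := add_comm _ _
    _ = nu b := h2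

lemma nuGE_add_left' (a b : F) : nuGE F (a + b) a := by
  show nu (a + b) + nu a = nu (a + b)
  rw [nu_add]
  calc nu a + nu b + nu a = (nu a + nu a) + nu b := by ring
    _ = nu a + nu b := by rw [nuGE_refl' a]

lemma nuGE_add_right' (a b : F) : nuGE F (a + b) b := by
  rw [show a + b = b + a from add_comm a b]; exact nuGE_add_left' b a

lemma nuGE_add' {x a b : F} (h1 : nuGE F x a) (h2 : nuGE F x b) : nuGE F x (a + b) := by
  show nu x + nu (a + b) = nu x
  rw [nu_add, ← add_assoc, h1, h2]

lemma nuGE_mul_left {a b : F} (c : F) (h : nuGE F a b) : nuGE F (c * a) (c * b) := by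
  show nu (c * a) + nu (c * b) = nu (c * a)
  rw [nu_mul, nu_mul, ← mul_add, h]

lemma nuGE_mul_right {a b : F} (c : F) (h : nuGE F a b) : nuGE F (a * c) (b * c) := by
  rw [mul_comm a c, mul_comm b c]; exact nuGE_mul_left c h

lemma nuGE_mul' {a b c d : F} (h1 : nuGE F a b) (h2 : nuGE F c d) :
    nuGE F (a * c) (b * d) :=
  nuGE_trans' (nuGE_mul_right c h1) (nuGE_mul_left b h2)

lemma nuGE_total' (a b : F) : nuGE F a b ∨ nuGE F b a := by
  by_cases h : nu a = nu b
  · left; show nu a + nu b = nu a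
    rw [add_eq_nu _ _ (by rw [nu_idem, nu_idem, h]), nu_idem]
  · rcases add_cases (nu a) (nu b) (by rw [nu_idem, nu_idem]; exact h) with h' | h'
    · left; exact h'
    · right; show nu b + nu a = nu b; rw [add_comm]; exact h'

lemma nu_eq_zero' {a : F} (h : nu a = 0) : a = 0 := by
  by_contra ha
  have hta : nu a ≠ a := by rw [h]; exact fun h' => ha h'.symm
  obtain ⟨b, _, hab⟩ := tangible_inv a hta
  have h1 : nu (1 : F) = 0 := by rw [← hab, nu_mul, h, zero_mul]
  have h10 : (1 : F) = 0 := by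
    have := add_eq_nu (1 : F) 0 (by rw [h1, nu_zero])
    rwa [add_zero, h1] at this
  exact ha (by rw [← mul_one a, h10, mul_zero])

lemma exists_nu_inv {b : F} (hb : b ≠ 0) : ∃ c : F, nu b * nu c = nu 1 := by
  by_cases h : nu b = b
  · obtain ⟨t, ht, htb⟩ := nu_onto b h hb
    obtain ⟨u, _, htu⟩ := tangible_inv t ht
    exact ⟨u, by rw [← htb, nu_idem, ← nu_mul, htu]⟩
  · obtain ⟨c, _, hbc⟩ := tangible_inv b h
    exact ⟨c, by rw [← nu_mul, hbc]⟩

lemma nuGE_of_sq {a b : F} (h : nuGE F (a * a) (b * b)) : nuGE F a b := by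
  rcases nuGE_total' a b with h' | h'
  · exact h'
  · -- h' : b ≥ a; show nu a = nu b, hence done
    suffices hab : nu a = nu b by
      show nu a + nu b = nu a; rw [hab]; exact nuGE_refl' b
    by_cases hb : b = 0
    · subst hb
      have : nu (0:F) + nu a = nu (0:F) := h'
      rw [nu_zero, zero_add] at this
      rw [this, nu_zero]
    · have hba : nuGE F (b * b) (a * b) := nuGE_mul_right b h'
      have hab2 : nuGE F (a * b) (a * a) := nuGE_mul_left a h'
      have e1 : nu (a * b) = nu (b * b) :=
        nu_antisymm (nuGE_trans' hab2 h) hba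
      rw [nu_mul, nu_mul] at e1
      obtain ⟨c, hc⟩ := exists_nu_inv hb
      calc nu a = nu a * nu 1 := by rw [← nu_mul, mul_one]
        _ = nu a * (nu b * nu c) := by rw [hc]
        _ = (nu a * nu b) * nu c := by ring
        _ = (nu b * nu b) * nu c := by rw [e1]
        _ = nu b * (nu b * nu c) := by ring
        _ = nu b * nu 1 := by rw [hc]
        _ = nu b := by rw [← nu_mul, mul_one]

lemma nuGE_sum' {ι : Type*} {t : Finset ι} {x : F} {f : ι → F}
    (h : ∀ i ∈ t, nuGE F x (f i)) : nuGE F x (∑ i ∈ t, f i) := by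
  classical
  induction t using Finset.induction_on with
  | empty =>
    show nu x + nu (0 : F) = nu x
    rw [nu_zero, add_zero]
  | insert _ _ hi ih =>
    rw [Finset.sum_insert hi]
    exact nuGE_add' (h _ (Finset.mem_insert_self _ _))
      (ih fun i hit => h i (Finset.mem_insert_of_mem hit))

lemma sum_nuGE' {ι : Type*} {t : Finset ι} {f : ι → F} {i : ι} (hi : i ∈ t) :
    nuGE F (∑ j ∈ t, f j) (f i) := by
  classical
  rw [← Finset.add_sum_erase t f hi]
  exact nuGE_add_left' _ _

lemma nuGE_double_sum_mul {ι κ : Type*} {s : Finset ι} {t : Finset κ} {X : F}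
    {f : ι → F} {g : κ → F} (h : ∀ i ∈ s, ∀ j ∈ t, nuGE F X (f i * g j)) :
    nuGE F X ((∑ i ∈ s, f i) * ∑ j ∈ t, g j) := by
  rw [Finset.sum_mul_sum]
  exact nuGE_sum' fun i hi => nuGE_sum' fun j hj => h i hi j hj

lemma cs_term {X c1 c2 d1 d2 u1 u2 w1 w2 t1 t2 : F}
    (h1 : nuGE F X (c1 * c1 * u1 * (d1 * d1 * w1)))
    (h2 : nuGE F X (c2 * c2 * u2 * (d2 * d2 * w2)))
    (k1 : nuGE F (u1 * w1) (t1 * t1)) (k2 : nuGE F (u2 * w2) (t2 * t2)) :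
    nuGE F X (c1 * d1 * t1 * (c2 * d2 * t2)) := by
  apply nuGE_of_sq
  refine nuGE_trans' (nuGE_mul' h1 h2) ?_
  have e1 : c1 * c1 * u1 * (d1 * d1 * w1) * (c2 * c2 * u2 * (d2 * d2 * w2)) =
      c1 * c1 * (d1 * d1) * (c2 * c2 * (d2 * d2)) * (u1 * w1 * (u2 * w2)) := by ring
  have e2 : c1 * d1 * t1 * (c2 * d2 * t2) * (c1 * d1 * t1 * (c2 * d2 * t2)) =
      c1 * c1 * (d1 * d1) * (c2 * c2 * (d2 * d2)) * (t1 * t1 * (t2 * t2)) := by ring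
  rw [e1, e2]
  exact nuGE_mul' (nuGE_refl' _) (nuGE_mul' k1 k2)

section Bil

variable {V : Type*} [AddCommMonoid V] [Module F V] {B : V → V → F}
  (hstrict : IsStrict F B)

include hstrict

lemma B_smul_left' (a : F) (v w : V) : B (a • v) w = a * B v w := by
  have := hstrict a 0 1 0 v 0 w 0
  simpa using this

lemma B_smul_right' (a : F) (v w : V) : B v (a • w) = a * B v w := by
  have := hstrict 1 0 a 0 v 0 w 0
  simpa [mul_comm] using this

lemma B_add_left' (v₁ v₂ w : V) : B (v₁ + v₂) w = B v₁ w + B v₂ w := by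
  have := hstrict 1 1 1 0 v₁ v₂ w 0
  simpa using this

lemma B_add_right' (v w₁ w₂ : V) : B v (w₁ + w₂) = B v w₁ + B v w₂ := by
  have := hstrict 1 0 1 1 v 0 w₁ w₂
  simpa using this

lemma B_zero_left' (w : V) : B 0 w = 0 := by
  have := hstrict 0 0 1 0 (0 : V) 0 w 0
  simpa using this

lemma B_zero_right' (v : V) : B v 0 = 0 := by
  have := hstrict 1 0 0 0 v 0 (0 : V) 0
  simpa using this

lemma B_sum_left' {ι : Type*} (t : Finset ι) (f : ι → V) (w : V) :
    B (∑ i ∈ t, f i) w = ∑ i ∈ t, B (f i) w := by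
  classical
  induction t using Finset.induction_on with
  | empty => simpa using B_zero_left' hstrict w
  | insert _ _ hi ih =>
    rw [Finset.sum_insert hi, Finset.sum_insert hi, B_add_left' hstrict, ih]

lemma B_sum_right' {ι : Type*} (t : Finset ι) (v : V) (f : ι → V) :
    B v (∑ i ∈ t, f i) = ∑ i ∈ t, B v (f i) := by
  classical
  induction t using Finset.induction_on with
  | empty => simpa using B_zero_right' hstrict v
  | insert _ _ hi ih =>
    rw [Finset.sum_insert hi, Finset.sum_insert hi, B_add_right' hstrict, ih]

lemma B_expand {m : ℕ} (s : Fin m → V) (α β : Fin m → F) :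
    B (∑ i, α i • s i) (∑ j, β j • s j) =
      ∑ i, ∑ j, α i * β j * B (s i) (s j) := by
  rw [B_sum_left' hstrict]
  refine Finset.sum_congr rfl fun i _ => ?_
  rw [B_smul_left' hstrict, B_sum_right' hstrict, Finset.mul_sum]
  refine Finset.sum_congr rfl fun j _ => ?_
  rw [B_smul_right' hstrict]
  ring

end Bil

end Aux

open Supertropical in
/-- STATEMENT 16: For a strict supertropically symmetric bilinear form, if any
two elements of `S = {s₁,…,s_n}` form a Cauchy-Schwartz pair, then any two
vectors in the span of `S` are weakly Cauchy-Schwartz. -/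
theorem stmt16 {F : Type*} [SupertropicalSemifield F]
    {V : Type*} [AddCommMonoid V] [Module F V]
    (B : V → V → F) (hB : IsBilinear F B) (hstrict : IsStrict F B)
    (hsym : SupSymmetric F B)
    {m : ℕ} (s : Fin m → V)
    (hcs : ∀ i j, i ≠ j → CS F B (s i) (s j)) :
    ∀ α β : Fin m → F, WeakCS F B (∑ i, α i • s i) (∑ j, β j • s j) := by
  classical
  intro α β
  -- key inequality from the Cauchy-Schwartz hypothesis
  have key : ∀ i j, nuGE F (B (s i) (s i) * B (s j) (s j))
      (B (s i) (s j) * B (s i) (s j)) := by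
    intro i j
    by_cases h : i = j
    · subst h; exact nuGE_refl' _
    · have h1 := (hcs i j h).1
      have h2 : nuGE F (B (s i) (s j) ^ 2 + B (s j) (s i) ^ 2)
          (B (s i) (s j) * B (s i) (s j)) := by
        rw [← pow_two]; exact nuGE_add_left' _ _
      exact nuGE_trans' h1 h2
  unfold WeakCS
  rw [B_expand hstrict s α α, B_expand hstrict s β β, B_expand hstrict s α β,
    B_expand hstrict s β α]
  have hVd : ∀ p : Fin m, nuGE F (∑ i, ∑ k, α i * α k * B (s i) (s k))
      (α p * α p * B (s p) (s p)) := fun p =>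
    nuGE_trans' (sum_nuGE' (Finset.mem_univ p)) (sum_nuGE' (Finset.mem_univ p))
  have hWd : ∀ q : Fin m, nuGE F (∑ j, ∑ l, β j * β l * B (s j) (s l))
      (β q * β q * B (s q) (s q)) := fun q =>
    nuGE_trans' (sum_nuGE' (Finset.mem_univ q)) (sum_nuGE' (Finset.mem_univ q))
  apply nuGE_add'
  · -- the ⟨v,w⟩² part
    rw [pow_two]
    refine nuGE_double_sum_mul fun i _ k _ => ?_
    refine nuGE_double_sum_mul fun j _ l _ => ?_
    exact cs_term (nuGE_mul' (hVd i) (hWd j)) (nuGE_mul' (hVd k) (hWd l))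
      (key i j) (key k l)
  · -- the ⟨w,v⟩² part
    rw [pow_two]
    refine nuGE_double_sum_mul fun i _ k _ => ?_
    refine nuGE_double_sum_mul fun j _ l _ => ?_
    have h1 : nuGE F ((∑ i, ∑ k, α i * α k * B (s i) (s k)) *
        ∑ j, ∑ l, β j * β l * B (s j) (s l))
        (β i * β i * B (s i) (s i) * (α j * α j * B (s j) (s j))) := by
      rw [mul_comm (β i * β i * B (s i) (s i)) (α j * α j * B (s j) (s j))]
      exact nuGE_mul' (hVd j) (hWd i)
    have h2 : nuGE F ((∑ i, ∑ k, α i * α k * B (s i) (s k)) *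
        ∑ j, ∑ l, β j * β l * B (s j) (s l))
        (β k * β k * B (s k) (s k) * (α l * α l * B (s l) (s l))) := by
      rw [mul_comm (β k * β k * B (s k) (s k)) (α l * α l * B (s l) (s l))]
      exact nuGE_mul' (hVd l) (hWd k)
    exact cs_term h1 h2 (key i j) (key k l)
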